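/- Let p be an odd prime and G ≅ Z_p³. Then there exists a proper Cayley digraph Γ on G such that the Cayley index of Γ is exactly p and Aut(Γ) contains a nonabelian regular subgroup. -/

import Mathlib

set_option linter.unusedSectionVars false

/-- The automorphism group of a digraph given by an adjacency relation. -/
def dAut {V : Type*} (adj : V → V → Prop) : Subgroup (Equiv.Perm V) where
  carrier := {σ | ∀ u v : V, adj (σ u) (σ v) ↔ adj u v}
  one_mem' := by intro u v; rfl
  mul_mem' := by
    intro a b ha hb u v
    simp only [Set.mem_setOf_eq] at *
    rw [Equiv.Perm.mul_apply, Equiv.Perm.mul_apply, ha, hb]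
  inv_mem' := by
    intro a ha u v
    simpa using (ha (a⁻¹ u) (a⁻¹ v)).symm

/-- Adjacency of the Cayley digraph `Cay(G,S)`. -/
def cayAdj (G : Type*) [Group G] (S : Set G) : G → G → Prop :=
  fun u v => v * u⁻¹ ∈ S

/-- The right regular representation of `G` in `Equiv.Perm G`. -/
def rightReg (G : Type*) [Group G] : G →* Equiv.Perm G where
  toFun g := Equiv.mulRight g⁻¹
  map_one' := by ext x; simp
  map_mul' := by intro a b; ext x; simp [mul_assoc]

/-- The right regular representation of `G` as a subgroup of `Aut(Cay(G,S))`. -/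
def cayleyRR (G : Type*) [Group G] (S : Set G) :
    Subgroup (dAut (cayAdj G S)) :=
  ((rightReg G).range).subgroupOf (dAut (cayAdj G S))

/-- A subgroup of `Equiv.Perm V` is regular if it is sharply transitive on `V`. -/
def IsRegularSub {V : Type*} (H : Subgroup (Equiv.Perm V)) : Prop :=
  ∀ v w : V, ∃! h : H, (h : Equiv.Perm V) v = w

/-- Adjacency of the cartesian product of two digraphs. -/
def cartAdj {α β : Type*} (adjG : α → α → Prop) (adjD : β → β → Prop) :
    α × β → α × β → Prop :=
  fun u v => (u.1 = v.1 ∧ adjD u.2 v.2) ∨ (u.2 = v.2 ∧ adjG u.1 v.1)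

/-- `pathLe adj i u v` : there is a directed path of length at most `i` from `u` to `v`. -/
def pathLe {V : Type*} (adj : V → V → Prop) : ℕ → V → V → Prop
  | 0, u, v => u = v
  | (n+1), u, v => pathLe adj n u v ∨ ∃ w, pathLe adj n u w ∧ adj w v

namespace CayP


variable (p : ℕ)

abbrev V := ZMod p × ZMod p × ZMod p

noncomputable def half : ZMod p := (2 : ZMod p)⁻¹

def Sv : Set (V p) :=
  {w | (w.1 = 0 ∧ w.2.1 = 1) ∨ (w.1 = 1 ∧ 2 * w.2.2 = w.2.1 * (w.2.1 - 1))}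

def adjV (u v : V p) : Prop := v - u ∈ Sv p

noncomputable def av (t : ZMod p) : V p := (1, t, half p * (t * (t - 1)))
def bv (t : ZMod p) : V p := (0, 1, t)

noncomputable def bmapf (k : ZMod p) (w : V p) : V p :=
  (w.1, w.2.1 + k * w.1, w.2.2 + k * w.2.1 + (half p * (k * (k - 1))) * w.1)

variable {p}

lemma adjV_iff (u v : V p) : adjV p u v ↔
    ((v.1 - u.1 = 0 ∧ v.2.1 - u.2.1 = 1) ∨
     (v.1 - u.1 = 1 ∧ 2 * (v.2.2 - u.2.2) = (v.2.1 - u.2.1) * ((v.2.1 - u.2.1) - 1))) :=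
  Iff.rfl

variable [Fact p.Prime]

lemma zmod_ind (P : ZMod p → Prop) (h0 : P 0) (hs : ∀ t, P t → P (t + 1)) : ∀ t, P t := by
  intro t
  obtain ⟨n, rfl⟩ := ZMod.natCast_rightInverse.surjective t
  induction n with
  | zero => simpa using h0
  | succ n ih => push_cast; exact hs _ ih

section H1

variable (h1 : (2 : ZMod p) * half p = 1)
include h1

lemma av_mem (t : ZMod p) : av p t ∈ Sv p := by
  refine Or.inr ⟨rfl, ?_⟩
  show 2 * (half p * (t * (t - 1))) = t * (t - 1)
  linear_combination (t * (t - 1)) * h1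

omit h1 in
lemma bv_mem (t : ZMod p) : bv p t ∈ Sv p := Or.inl ⟨rfl, rfl⟩

lemma mem_Sv_cases {w : V p} (hw : w ∈ Sv p) :
    (∃ t, w = bv p t) ∨ (∃ t, w = av p t) := by
  rcases hw with ⟨e1, e2⟩ | ⟨e1, e2⟩
  · left; exact ⟨w.2.2, by ext <;> simp [bv, e1, e2]⟩
  · right
    refine ⟨w.2.1, ?_⟩
    have h2 : (2 : ZMod p) ≠ 0 := left_ne_zero_of_mul_eq_one h1
    have e3 : w.2.2 = half p * (w.2.1 * (w.2.1 - 1)) := by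
      apply mul_left_cancel₀ h2
      linear_combination e2 - (w.2.1 * (w.2.1 - 1)) * h1
    ext
    · exact e1
    · rfl
    · exact e3

omit h1 in
lemma adj_av_av (s t : ZMod p) : adjV p (av p s) (av p t) ↔ t = s + 1 := by
  rw [adjV_iff]
  constructor
  · rintro (⟨_, e2⟩ | ⟨e1, _⟩)
    · simpa [av, sub_eq_iff_eq_add, add_comm] using e2
    · exfalso; simp [av] at e1
  · rintro rfl
    exact Or.inl ⟨sub_self _, by show av p (s+1) |>.2.1 - (av p s).2.1 = 1; simp [av]⟩

lemma adj_bv_av (u t : ZMod p) : adjV p (bv p u) (av p t) ↔ u = t - 1 := by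
  have h2 : (2 : ZMod p) ≠ 0 := left_ne_zero_of_mul_eq_one h1
  rw [adjV_iff]
  constructor
  · rintro (⟨e1, _⟩ | ⟨_, e2⟩)
    · exfalso; simp only [av, bv] at e1; exact one_ne_zero (by linear_combination e1)
    · simp only [av, bv] at e2
      apply mul_left_cancel₀ h2
      linear_combination -e2 + (t * (t - 1)) * h1
  · rintro rfl
    refine Or.inr ⟨by show (av p t).1 - (bv p (t-1)).1 = 1; simp [av, bv], ?_⟩
    simp only [av, bv]
    linear_combination (t * (t - 1)) * h1

lemma no_in_bv {s : V p} (hs : s ∈ Sv p) (t : ZMod p) : ¬ adjV p s (bv p t) := by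
  have h2 : (2 : ZMod p) ≠ 0 := left_ne_zero_of_mul_eq_one h1
  rcases mem_Sv_cases h1 hs with ⟨u, rfl⟩ | ⟨u, rfl⟩ <;> rw [adjV_iff] <;>
    rintro (⟨e1, e2⟩ | ⟨e1, e2⟩) <;> simp only [av, bv] at e1 e2
  · exact h2 (by linear_combination -2 * e2)
  · exact h2 (by linear_combination -2 * e1)
  · exact h2 (by linear_combination -2 * e1)
  · exact h2 (by linear_combination -e1)

omit h1 in
lemma bmapf_zero (w : V p) : bmapf p 0 w = w := by
  ext <;> simp [bmapf]

lemma bmapf_comp (j k : ZMod p) (w : V p) :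
    bmapf p j (bmapf p k w) = bmapf p (j + k) w := by
  ext
  · rfl
  · show (w.2.1 + k * w.1) + j * w.1 = w.2.1 + (j + k) * w.1; ring
  · show (w.2.2 + k * w.2.1 + (half p * (k * (k - 1))) * w.1) + j * (w.2.1 + k * w.1)
        + (half p * (j * (j - 1))) * w.1
      = w.2.2 + (j + k) * w.2.1 + (half p * ((j + k) * ((j + k) - 1))) * w.1
    linear_combination (-(j * k * w.1)) * h1

omit h1 in
lemma bmapf_sub (k : ZMod p) (u v : V p) :
    bmapf p k v - bmapf p k u = bmapf p k (v - u) := by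
  ext <;> simp only [bmapf, Prod.fst_sub, Prod.snd_sub] <;> ring

lemma bmapf_Sv {w : V p} (k : ZMod p) (hw : w ∈ Sv p) : bmapf p k w ∈ Sv p := by
  rcases hw with ⟨e1, e2⟩ | ⟨e1, e2⟩
  · exact Or.inl ⟨e1, by show w.2.1 + k * w.1 = 1; linear_combination e2 + k * e1⟩
  · refine Or.inr ⟨e1, ?_⟩
    show 2 * (w.2.2 + k * w.2.1 + (half p * (k * (k - 1))) * w.1)
      = (w.2.1 + k * w.1) * ((w.2.1 + k * w.1) - 1)
    linear_combination e2 + (w.1 * (k * (k - 1))) * h1 - (2 * k * w.2.1 + k ^ 2 * w.1) * e1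

lemma bmapf_mem_iff {w : V p} (k : ZMod p) : bmapf p k w ∈ Sv p ↔ w ∈ Sv p := by
  constructor
  · intro h
    have := bmapf_Sv h1 (-k) h
    rwa [bmapf_comp h1, neg_add_cancel, bmapf_zero] at this
  · exact bmapf_Sv h1 k

lemma bmapf_adj (k : ZMod p) (u v : V p) :
    adjV p (bmapf p k u) (bmapf p k v) ↔ adjV p u v := by
  unfold adjV
  rw [bmapf_sub, bmapf_mem_iff h1]

lemma bmapf_av (j s : ZMod p) : bmapf p j (av p s) = av p (s + j) := by
  ext
  · rfl
  · show s + j * 1 = s + j; ring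
  · show half p * (s * (s - 1)) + j * s + (half p * (j * (j - 1))) * 1
      = half p * ((s + j) * ((s + j) - 1))
    linear_combination (-(j * s)) * h1

omit h1 in
lemma bmapf_bv (j s : ZMod p) : bmapf p j (bv p s) = bv p (s + j) := by
  ext <;> simp [bmapf, bv]

omit h1 in
lemma bmapf_zero_pt (k : ZMod p) : bmapf p k 0 = 0 := by
  ext <;> simp [bmapf] <;> rfl

-- uniqueness of common out-neighbours of `bv z` and `av s`
lemma U1a {z s : ZMod p} {w : V p} (hbw : adjV p (bv p z) w) (haw : adjV p (av p s) w) :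
    w.1 = 1 ∧ w.2.1 = s + 1 ∧ 2 * w.2.2 = 2 * z + s * (s - 1) := by
  have h2 : (2 : ZMod p) ≠ 0 := left_ne_zero_of_mul_eq_one h1
  rw [adjV_iff] at hbw haw
  simp only [av, bv] at hbw haw
  rcases hbw with ⟨e1, e2⟩ | ⟨e1, e2⟩ <;> rcases haw with ⟨f1, f2⟩ | ⟨f1, f2⟩
  · exact absurd (by linear_combination 2 * e1 - 2 * f1) h2
  · exact absurd (by linear_combination e1 - f1) h2
  · exact ⟨by linear_combination e1, by linear_combination f2,
      by linear_combination e2 + (w.2.1 + s - 2) * f2⟩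
  · exact absurd (by linear_combination 2 * e1 - 2 * f1) h2

lemma U1 {z s : ZMod p} {w w' : V p}
    (hw1 : adjV p (bv p z) w) (hw2 : adjV p (av p s) w)
    (hw1' : adjV p (bv p z) w') (hw2' : adjV p (av p s) w') : w = w' := by
  have h2 : (2 : ZMod p) ≠ 0 := left_ne_zero_of_mul_eq_one h1
  obtain ⟨a1, a2, a3⟩ := U1a h1 hw1 hw2
  obtain ⟨b1, b2, b3⟩ := U1a h1 hw1' hw2'
  ext
  · rw [a1, b1]
  · rw [a2, b2]
  · exact mul_left_cancel₀ h2 (by rw [a3, b3])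

-- unique common out-neighbour of (x,Y,Z) and (x,Y-1,Z)
lemma U2a {x Y Z : ZMod p} {W : V p}
    (hA : adjV p (x, Y, Z) W) (hB : adjV p ((x, Y - 1, Z) : V p) W) :
    W = (x + 1, Y, Z) := by
  have h2 : (2 : ZMod p) ≠ 0 := left_ne_zero_of_mul_eq_one h1
  rw [adjV_iff] at hA hB
  dsimp only at hA hB
  rcases hA with ⟨e1, e2⟩ | ⟨e1, e2⟩ <;> rcases hB with ⟨f1, f2⟩ | ⟨f1, f2⟩
  · exact absurd (by linear_combination 2 * f2 - 2 * e2) h2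
  · exact absurd (by linear_combination 2 * e1 - 2 * f1) h2
  · exact absurd (by linear_combination 2 * f1 - 2 * e1) h2
  · have hW2 : W.2.1 = Y := mul_left_cancel₀ h2 (by linear_combination e2 - f2)
    have hW3 : W.2.2 = Z := mul_left_cancel₀ h2 (by linear_combination e2 + (W.2.1 - Y - 1) * hW2)
    ext
    · dsimp only; linear_combination e1
    · exact hW2
    · exact hW3

-- unique common in-neighbour of (1,Y,Z) and (1,Y+1,Z)
lemma U3a {Y Z : ZMod p} {W : V p}
    (hA : adjV p W (1, Y, Z)) (hB : adjV p W ((1, Y + 1, Z) : V p)) :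
    W = (0, Y, Z) := by
  have h2 : (2 : ZMod p) ≠ 0 := left_ne_zero_of_mul_eq_one h1
  rw [adjV_iff] at hA hB
  dsimp only at hA hB
  rcases hA with ⟨e1, e2⟩ | ⟨e1, e2⟩ <;> rcases hB with ⟨f1, f2⟩ | ⟨f1, f2⟩
  · exact absurd (by linear_combination 2 * f2 - 2 * e2) h2
  · exact absurd (by linear_combination 2 * e1 - 2 * f1) h2
  · exact absurd (by linear_combination 2 * f1 - 2 * e1) h2
  · have hW2 : W.2.1 = Y := mul_left_cancel₀ h2 (by linear_combination f2 - e2)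
    have hW3 : W.2.2 = Z := mul_left_cancel₀ h2 (by linear_combination -e2 + (Y - W.2.1 - 1) * hW2)
    ext
    · dsimp only; linear_combination -e1
    · exact hW2
    · exact hW3

noncomputable def bperm (k : ZMod p) : Equiv.Perm (V p) where
  toFun := bmapf p k
  invFun := bmapf p (-k)
  left_inv := fun w => by rw [bmapf_comp h1, neg_add_cancel, bmapf_zero]
  right_inv := fun w => by rw [bmapf_comp h1, add_neg_cancel, bmapf_zero]

omit h1 in
lemma mem_iff_adj_zero (s : V p) : s ∈ Sv p ↔ adjV p 0 s := by
  unfold adjV; rw [sub_zero]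

lemma rigidity (τ : Equiv.Perm (V p))
    (hτ : ∀ u v, adjV p (τ u) (τ v) ↔ adjV p u v) (h0 : τ 0 = 0)
    (ha : ∀ t, τ (av p t) = av p t) (hb : ∀ t, τ (bv p t) = bv p t) :
    ∀ w, τ w = w := by
  have himg : ∀ u v, adjV p u v → adjV p (τ u) (τ v) := fun u v h => (hτ u v).mpr h
  have plane1 : ∀ Y Z : ZMod p, τ (1, Y, Z) = (1, Y, Z) := by
    intro Y Z
    have e1 : adjV p (bv p (Z - half p * ((Y - 1) * (Y - 2)))) ((1, Y, Z) : V p) := by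
      rw [adjV_iff]; right
      dsimp only [bv]
      constructor
      · ring
      · linear_combination ((Y - 1) * (Y - 2)) * h1
    have e2 : adjV p (av p (Y - 1)) ((1, Y, Z) : V p) := by
      rw [adjV_iff]; left
      dsimp only [av]
      constructor <;> ring
    have i1 := himg _ _ e1
    rw [hb] at i1
    have i2 := himg _ _ e2
    rw [ha] at i2
    exact U1 h1 i1 i2 e1 e2
  have plane0 : ∀ Y Z : ZMod p, τ (0, Y, Z) = (0, Y, Z) := by
    intro Y Z
    have f1 : adjV p ((0, Y, Z) : V p) ((1, Y, Z) : V p) := by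
      rw [adjV_iff]; right; dsimp only; constructor <;> ring
    have f2 : adjV p ((0, Y, Z) : V p) ((1, Y + 1, Z) : V p) := by
      rw [adjV_iff]; right; dsimp only; constructor <;> ring
    have i1 := himg _ _ f1
    rw [plane1] at i1
    have i2 := himg _ _ f2
    rw [plane1] at i2
    exact U3a h1 i1 i2
  have step : ∀ x : ZMod p, (∀ Y Z : ZMod p, τ (x, Y, Z) = (x, Y, Z)) →
      ∀ Y Z : ZMod p, τ (x + 1, Y, Z) = (x + 1, Y, Z) := by
    intro x ih Y Z
    have g1 : adjV p ((x, Y, Z) : V p) ((x + 1, Y, Z) : V p) := by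
      rw [adjV_iff]; right; dsimp only; constructor <;> ring
    have g2 : adjV p ((x, Y - 1, Z) : V p) ((x + 1, Y, Z) : V p) := by
      rw [adjV_iff]; right; dsimp only; constructor <;> ring
    have i1 := himg _ _ g1
    rw [ih] at i1
    have i2 := himg _ _ g2
    rw [ih] at i2
    exact U2a h1 i1 i2
  have Q := zmod_ind (fun x => ∀ Y Z : ZMod p, τ (x, Y, Z) = (x, Y, Z)) plane0 step
  intro w
  have := Q w.1 w.2.1 w.2.2
  simpa only [Prod.mk.eta] using this

theorem fix_or_bmap (σ : Equiv.Perm (V p))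
    (hσ : ∀ u v, adjV p (σ u) (σ v) ↔ adjV p u v) (h0 : σ 0 = 0) :
    ∃ k, ∀ w, σ w = bmapf p k w := by
  have himg : ∀ u v, adjV p u v → adjV p (σ u) (σ v) := fun u v h => (hσ u v).mpr h
  have hS : ∀ s, s ∈ Sv p ↔ σ s ∈ Sv p := by
    intro s
    rw [mem_iff_adj_zero, mem_iff_adj_zero]
    conv_rhs => rw [← h0]
    exact (hσ 0 s).symm
  have hadj_inv : ∀ u v, adjV p (σ⁻¹ u) (σ⁻¹ v) ↔ adjV p u v := by
    intro u v
    have := hσ (σ⁻¹ u) (σ⁻¹ v)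
    rw [← Equiv.Perm.mul_apply, mul_inv_cancel, Equiv.Perm.one_apply,
      ← Equiv.Perm.mul_apply, mul_inv_cancel, Equiv.Perm.one_apply] at this
    exact this.symm
  have hSinv : ∀ s, s ∈ Sv p → σ⁻¹ s ∈ Sv p := by
    intro s hs
    have := (hS (σ⁻¹ s)).2
    rw [← Equiv.Perm.mul_apply, mul_inv_cancel, Equiv.Perm.one_apply] at this
    exact (this hs : _)
  have hbB : ∀ t, ∃ u, σ (bv p t) = bv p u := by
    intro t
    have hmem : σ (bv p t) ∈ Sv p := (hS _).mp (bv_mem t)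
    rcases mem_Sv_cases h1 hmem with ⟨u, hu⟩ | ⟨u, hu⟩
    · exact ⟨u, hu⟩
    · exfalso
      have harc : adjV p (bv p (u - 1)) (av p u) := (adj_bv_av h1 (u - 1) u).mpr rfl
      rw [← hu] at harc
      have := (hadj_inv (bv p (u - 1)) (σ (bv p t))).mpr harc
      rw [← Equiv.Perm.mul_apply, inv_mul_cancel, Equiv.Perm.one_apply] at this
      exact no_in_bv h1 (hSinv _ (bv_mem (u - 1))) t this
  have haA : ∀ t, ∃ u, σ (av p t) = av p u := by
    intro t
    have hmem : σ (av p t) ∈ Sv p := (hS _).mp (av_mem h1 t)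
    rcases mem_Sv_cases h1 hmem with ⟨u, hu⟩ | ⟨u, hu⟩
    · exfalso
      have harc : adjV p (bv p (t - 1)) (av p t) := (adj_bv_av h1 (t - 1) t).mpr rfl
      have := himg _ _ harc
      rw [hu] at this
      exact no_in_bv h1 ((hS _).mp (bv_mem (t - 1))) u this
    · exact ⟨u, hu⟩
  choose fa hfa using haA
  choose fb hfb using hbB
  have hstep : ∀ t, fa (t + 1) = fa t + 1 := by
    intro t
    have harc : adjV p (av p t) (av p (t + 1)) := (adj_av_av t (t + 1)).mpr rfl
    have := himg _ _ harc
    rw [hfa, hfa] at this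
    exact (adj_av_av _ _).mp this
  set k := fa 0 with hk
  have hfa_eq : ∀ t, fa t = t + k := by
    refine zmod_ind _ (by rw [zero_add]) ?_
    intro t ih
    rw [hstep, ih]; ring
  have hfb_eq : ∀ t, fb t = t + k := by
    intro t
    have harc : adjV p (bv p t) (av p (t + 1)) := (adj_bv_av h1 t (t + 1)).mpr (by ring)
    have := himg _ _ harc
    rw [hfa, hfb, hfa_eq] at this
    have := (adj_bv_av h1 _ _).mp this
    rw [this]; ring
  refine ⟨k, ?_⟩
  have hτadj : ∀ u v, adjV p ((σ.trans (bperm h1 (-k))) u) ((σ.trans (bperm h1 (-k))) v)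
      ↔ adjV p u v := by
    intro u v
    show adjV p (bmapf p (-k) (σ u)) (bmapf p (-k) (σ v)) ↔ _
    rw [bmapf_adj h1]
    exact hσ u v
  have hτ0 : (σ.trans (bperm h1 (-k))) 0 = 0 := by
    show bmapf p (-k) (σ 0) = 0
    rw [h0, bmapf_zero_pt]
  have hτa : ∀ t, (σ.trans (bperm h1 (-k))) (av p t) = av p t := by
    intro t
    show bmapf p (-k) (σ (av p t)) = av p t
    rw [hfa, hfa_eq, bmapf_av h1]
    congr 1; ring
  have hτb : ∀ t, (σ.trans (bperm h1 (-k))) (bv p t) = bv p t := by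
    intro t
    show bmapf p (-k) (σ (bv p t)) = bv p t
    rw [hfb, hfb_eq, bmapf_bv]
    congr 1; ring
  have hall := rigidity h1 _ hτadj hτ0 hτa hτb
  intro w
  have hw := congrArg (bmapf p k) (hall w)
  have : (σ.trans (bperm h1 (-k))) w = bmapf p (-k) (σ w) := rfl
  rw [this] at hw
  rw [bmapf_comp h1, add_neg_cancel, bmapf_zero] at hw
  exact hw

omit h1 in
lemma bmapf_add (k : ZMod p) (u v : V p) :
    bmapf p k (u + v) = bmapf p k u + bmapf p k v := by
  ext <;> simp only [bmapf, Prod.fst_add, Prod.snd_add] <;> ring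

omit h1 in
lemma bmapf_fst (k : ZMod p) (w : V p) : (bmapf p k w).1 = w.1 := rfl

omit h1 in
lemma adjV_translate (u v w : V p) : adjV p (u + w) (v + w) ↔ adjV p u v := by
  unfold adjV
  rw [add_sub_add_right_eq_sub]

end H1

section Gside

variable {G : Type*} [Group G] (E : G ≃ V p) (hE : ∀ u v : G, E (u * v) = E u + E v)
variable (h1 : (2 : ZMod p) * half p = 1)

def SG : Set G := {g | E g ∈ Sv p}

lemma mem_dAut {W : Type*} (adj : W → W → Prop) (σ : Equiv.Perm W) :
    σ ∈ dAut adj ↔ ∀ u v, adj (σ u) (σ v) ↔ adj u v := Iff.rfl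

section withE
include hE

lemma E_one : E 1 = 0 := by
  have := hE 1 1
  rw [mul_one] at this
  exact (left_eq_add.mp this)

lemma E_inv (u : G) : E u⁻¹ = - E u := by
  have := hE u⁻¹ u
  rw [inv_mul_cancel, E_one E hE] at this
  exact eq_neg_of_add_eq_zero_left this.symm

lemma cay_iff (u v : G) : cayAdj G (SG E) u v ↔ adjV p (E u) (E v) := by
  unfold cayAdj SG adjV
  rw [Set.mem_setOf_eq, hE, E_inv E hE, ← sub_eq_add_neg]

end withE

lemma rr_mem_dAut (S : Set G) (g : G) : rightReg G g ∈ dAut (cayAdj G S) := by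
  rw [mem_dAut]
  intro u v
  show cayAdj G S (u * g⁻¹) (v * g⁻¹) ↔ cayAdj G S u v
  unfold cayAdj
  have : v * g⁻¹ * (u * g⁻¹)⁻¹ = v * u⁻¹ := by group
  rw [this]

lemma rr_inj : Function.Injective (rightReg G) := by
  intro a b h
  have := congrArg (fun σ : Equiv.Perm G => σ 1) h
  simp only [rightReg, MonoidHom.coe_mk, OneHom.coe_mk, Equiv.coe_mulRight, one_mul] at this
  exact inv_injective this

/-- decomposition of the automorphism group -/
noncomputable def dAutEquiv (S : Set G) : ↥(dAut (cayAdj G S)) ≃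
    G × {τ : ↥(dAut (cayAdj G S)) // (τ : Equiv.Perm G) 1 = 1} where
  toFun σ := ⟨(σ : Equiv.Perm G) 1,
    ⟨⟨rightReg G ((σ : Equiv.Perm G) 1), rr_mem_dAut S _⟩ * σ, by
      show (rightReg G ((σ : Equiv.Perm G) 1)) ((σ : Equiv.Perm G) 1) = 1
      simp [rightReg]⟩⟩
  invFun x := ⟨rightReg G x.1, rr_mem_dAut S x.1⟩⁻¹ * x.2.1
  left_inv σ := inv_mul_cancel_left _ σ
  right_inv x := by
    obtain ⟨g, τ, hτ⟩ := x
    have hval : ((⟨rightReg G g, rr_mem_dAut S g⟩⁻¹ * τ :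
        ↥(dAut (cayAdj G S))) : Equiv.Perm G) 1 = g := by
      simp only [Subgroup.coe_mul, InvMemClass.coe_inv, Equiv.Perm.mul_apply, hτ]
      show (rightReg G g).symm 1 = g
      simp [rightReg]
    refine Prod.ext hval (Subtype.ext (Subtype.ext ?_))
    show rightReg G _ * _ = _
    rw [hval]
    simp only [Subgroup.coe_mul, InvMemClass.coe_inv]
    exact mul_inv_cancel_left _ _

lemma card_dAut (S : Set G) : Nat.card ↥(dAut (cayAdj G S)) =
    Nat.card G * Nat.card {τ : ↥(dAut (cayAdj G S)) // (τ : Equiv.Perm G) 1 = 1} := by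
  rw [← Nat.card_prod]
  exact Nat.card_congr (dAutEquiv S)

section withE2
include hE h1

noncomputable def bGperm (k : ZMod p) : Equiv.Perm G := (E.trans (bperm h1 k)).trans E.symm

omit hE in
lemma bGperm_apply (k : ZMod p) (g : G) :
    bGperm E h1 k g = E.symm (bmapf p k (E g)) := rfl

lemma bGperm_mem (k : ZMod p) : bGperm E h1 k ∈ dAut (cayAdj G (SG E)) := by
  rw [mem_dAut]
  intro u v
  rw [cay_iff E hE, cay_iff E hE, bGperm_apply, bGperm_apply,
    Equiv.apply_symm_apply, Equiv.apply_symm_apply, bmapf_adj h1]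

lemma bGperm_one (k : ZMod p) : bGperm E h1 k 1 = 1 := by
  rw [bGperm_apply, E_one E hE, bmapf_zero_pt, ← E_one E hE, Equiv.symm_apply_apply]

lemma fix_bij : Function.Bijective (fun k : ZMod p =>
    (⟨⟨bGperm E h1 k, bGperm_mem E hE h1 k⟩, bGperm_one E hE h1 k⟩ :
      {τ : ↥(dAut (cayAdj G (SG E))) // (τ : Equiv.Perm G) 1 = 1})) := by
  constructor
  · intro j k h
    have h2 := congrArg (fun τ : {τ : ↥(dAut (cayAdj G (SG E))) // (τ : Equiv.Perm G) 1 = 1}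
      => (τ.1 : Equiv.Perm G) (E.symm (bv p 0))) h
    simp only [bGperm_apply, Equiv.apply_symm_apply] at h2
    rw [bmapf_bv, bmapf_bv, zero_add, zero_add] at h2
    have h3 := E.symm.injective h2
    simpa [bv, Prod.ext_iff] using h3
  · rintro ⟨⟨τ, hτmem⟩, hτ1⟩
    have hadj : ∀ u v, adjV p (((E.symm.trans τ).trans E) u) (((E.symm.trans τ).trans E) v)
        ↔ adjV p u v := by
      intro u v
      show adjV p (E (τ (E.symm u))) (E (τ (E.symm v))) ↔ _
      rw [← cay_iff E hE]
      rw [hτmem (E.symm u) (E.symm v), cay_iff E hE, Equiv.apply_symm_apply,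
        Equiv.apply_symm_apply]
    have h0 : ((E.symm.trans τ).trans E) 0 = 0 := by
      show E (τ (E.symm 0)) = 0
      rw [← E_one E hE, Equiv.symm_apply_apply, hτ1, E_one E hE]
    obtain ⟨k, hk⟩ := fix_or_bmap h1 _ hadj h0
    refine ⟨k, ?_⟩
    refine Subtype.ext (Subtype.ext (Equiv.ext fun g => ?_))
    have := hk (E g)
    simp only [Equiv.trans_apply, Equiv.symm_apply_apply] at this
    show E.symm (bmapf p k (E g)) = τ g
    rw [← this, Equiv.symm_apply_apply]

lemma card_fix : Nat.card {τ : ↥(dAut (cayAdj G (SG E))) // (τ : Equiv.Perm G) 1 = 1} = p := by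
  rw [← Nat.card_congr (Equiv.ofBijective _ (fix_bij E hE h1)), Nat.card_zmod]

lemma index_val (hp0 : 0 < p) (hcard : Nat.card G = p ^ 3) :
    (cayleyRR G (SG E)).index = p := by
  have hle : (rightReg G).range ≤ dAut (cayAdj G (SG E)) := by
    rintro x ⟨g, rfl⟩
    exact rr_mem_dAut _ g
  have hcardsub : Nat.card ((rightReg G).range.subgroupOf (dAut (cayAdj G (SG E))))
      = Nat.card G := by
    rw [Nat.card_congr (Subgroup.subgroupOfEquivOfLe hle).toEquiv]
    exact (Nat.card_congr (MonoidHom.ofInjective (rr_inj (G := G))).toEquiv).symm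
  have hmul := Subgroup.card_mul_index ((rightReg G).range.subgroupOf (dAut (cayAdj G (SG E))))
  rw [hcardsub, card_dAut, card_fix E hE h1, hcard] at hmul
  have : (cayleyRR G (SG E)).index = ((rightReg G).range.subgroupOf
      (dAut (cayAdj G (SG E)))).index := rfl
  rw [this]
  exact Nat.eq_of_mul_eq_mul_left (pow_pos hp0 3) hmul

noncomputable def eGperm (v : V p) : Equiv.Perm G :=
  (E.trans ((bperm h1 v.1).trans (Equiv.addRight v))).trans E.symm

omit hE in
lemma eGperm_apply (v : V p) (g : G) :
    eGperm E h1 v g = E.symm (bmapf p v.1 (E g) + v) := rfl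

omit hE in
lemma eG_mul (u v : V p) :
    eGperm E h1 u * eGperm E h1 v = eGperm E h1 (bmapf p u.1 v + u) := by
  apply Equiv.ext
  intro g
  show eGperm E h1 u (eGperm E h1 v g) = _
  rw [eGperm_apply, eGperm_apply, eGperm_apply, Equiv.apply_symm_apply]
  congr 1
  rw [bmapf_add, bmapf_comp h1]
  rw [show (bmapf p u.1 v + u).1 = u.1 + v.1 from by
    rw [Prod.fst_add, bmapf_fst]; ring]
  abel

omit hE in
lemma eG_zero : eGperm E h1 0 = 1 := by
  apply Equiv.ext
  intro g
  rw [eGperm_apply]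
  show E.symm (bmapf p (0 : V p).1 (E g) + 0) = g
  have : (0 : V p).1 = 0 := rfl
  rw [this, bmapf_zero, add_zero, Equiv.symm_apply_apply]

omit hE in
lemma eG_inj : Function.Injective (eGperm E h1) := by
  intro u v h
  have := congrArg (fun σ : Equiv.Perm G => E (σ (E.symm 0))) h
  simp only [eGperm_apply, Equiv.apply_symm_apply, bmapf_zero_pt, zero_add] at this
  exact this

noncomputable def HG : Subgroup (Equiv.Perm G) where
  carrier := Set.range (eGperm E h1)
  one_mem' := ⟨0, eG_zero E h1⟩
  mul_mem' := by
    rintro _ _ ⟨u, rfl⟩ ⟨v, rfl⟩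
    exact ⟨bmapf p u.1 v + u, (eG_mul E h1 u v).symm⟩
  inv_mem' := by
    rintro _ ⟨v, rfl⟩
    refine ⟨-(bmapf p (-v.1) v), ?_⟩
    have hfst : (-(bmapf p (-v.1) v)).1 = -v.1 := by
      rw [Prod.fst_neg, bmapf_fst]
    have : eGperm E h1 (-(bmapf p (-v.1) v)) * eGperm E h1 v = 1 := by
      rw [eG_mul, hfst]
      have : bmapf p (-v.1) v + -bmapf p (-v.1) v = 0 := by abel
      rw [this, eG_zero]
    exact eq_inv_of_mul_eq_one_left this

omit hE in
lemma mem_HG {σ : Equiv.Perm G} : σ ∈ HG E h1 ↔ ∃ v, eGperm E h1 v = σ := Iff.rfl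

lemma HG_le_dAut : HG E h1 ≤ dAut (cayAdj G (SG E)) := by
  rintro _ ⟨v, rfl⟩
  rw [mem_dAut]
  intro a b
  rw [cay_iff E hE, cay_iff E hE, eGperm_apply, eGperm_apply,
    Equiv.apply_symm_apply, Equiv.apply_symm_apply, adjV_translate, bmapf_adj h1]

omit hE in
lemma HG_regular : IsRegularSub (HG E h1) := by
  intro g h
  set k := (E h).1 - (E g).1 with hk
  set v := E h - bmapf p k (E g) with hv
  have hv1 : v.1 = k := by
    rw [hv, Prod.fst_sub, bmapf_fst, hk]
  have hval : eGperm E h1 v g = h := by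
    rw [eGperm_apply, hv1]
    have : bmapf p k (E g) + (E h - bmapf p k (E g)) = E h := by abel
    rw [hv, this, Equiv.symm_apply_apply]
  refine ⟨⟨eGperm E h1 v, ⟨v, rfl⟩⟩, hval, ?_⟩
  rintro ⟨σ', hσ'⟩ hval'
  obtain ⟨v', rfl⟩ := hσ'
  simp only at hval'
  have e : bmapf p v'.1 (E g) + v' = E h := by
    have := congrArg E hval'
    rwa [eGperm_apply, Equiv.apply_symm_apply] at this
  have e1 : (E g).1 + v'.1 = (E h).1 := by
    have := congrArg Prod.fst e
    rwa [Prod.fst_add, bmapf_fst] at this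
  have hk' : v'.1 = k := by rw [hk]; exact eq_sub_of_add_eq' e1
  have hv' : v' = v := by
    have h2 : v' = E h - bmapf p v'.1 (E g) := eq_sub_of_add_eq' e
    rw [hk'] at h2
    rw [← hv] at h2
    exact h2
  apply Subtype.ext
  show eGperm E h1 v' = eGperm E h1 v
  rw [hv']

omit hE in
lemma HG_nonabelian : ¬ ∀ a ∈ HG E h1, ∀ b ∈ HG E h1, a * b = b * a := by
  intro hab
  have h2 : (2 : ZMod p) ≠ 0 := left_ne_zero_of_mul_eq_one h1
  have := hab (eGperm E h1 ((1 : ZMod p), (0 : ZMod p), (0 : ZMod p))) ⟨_, rfl⟩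
    (eGperm E h1 ((0 : ZMod p), (1 : ZMod p), (0 : ZMod p))) ⟨_, rfl⟩
  rw [eG_mul, eG_mul] at this
  have harg := eG_inj E h1 this
  have h3 := congrArg (fun w : V p => w.2.2) harg
  simp only [bmapf, Prod.snd_add, Prod.fst_add] at h3
  exact one_ne_zero (by linear_combination h3)

include hE in
lemma one_not_mem : (1 : G) ∉ SG E := by
  intro hmem
  have : E 1 ∈ Sv p := hmem
  rw [E_one E hE] at this
  rcases this with ⟨e1, e2⟩ | ⟨e1, e2⟩
  · exact one_ne_zero (e2.symm.trans rfl : (1 : ZMod p) = 0)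
  · exact one_ne_zero (e1.symm.trans rfl : (1 : ZMod p) = 0)

include hE in
lemma proper_arc : ∃ u v : G, cayAdj G (SG E) u v ∧ ¬ cayAdj G (SG E) v u := by
  have h2 : (2 : ZMod p) ≠ 0 := left_ne_zero_of_mul_eq_one h1
  refine ⟨1, E.symm ((1 : ZMod p), (0 : ZMod p), (0 : ZMod p)), ?_, ?_⟩
  · rw [cay_iff E hE, E_one E hE, Equiv.apply_symm_apply, ← mem_iff_adj_zero]
    refine Or.inr ⟨rfl, ?_⟩
    show (2 : ZMod p) * 0 = 0 * (0 - 1); ring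
  · rw [cay_iff E hE, E_one E hE, Equiv.apply_symm_apply, adjV_iff]
    rintro (⟨e1, e2⟩ | ⟨e1, e2⟩) <;>
      simp only [Prod.fst_zero, Prod.snd_zero] at e1 e2
    · exact one_ne_zero (by linear_combination -e1)
    · exact h2 (by linear_combination -e1)

end withE2

end Gside

variable (p) in
def tripleEquiv : (Fin 3 → ZMod p) ≃ V p where
  toFun f := (f 0, f 1, f 2)
  invFun w := ![w.1, w.2.1, w.2.2]
  left_inv f := by
    funext i
    fin_cases i <;> rfl
  right_inv w := rfl

lemma tripleEquiv_add (f g : Fin 3 → ZMod p) :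
    tripleEquiv p (f + g) = tripleEquiv p f + tripleEquiv p g := rfl

lemma two_ne_zero' (hp2 : p ≠ 2) : (2 : ZMod p) ≠ 0 := by
  have : ((2 : ℕ) : ZMod p) = (2 : ZMod p) := by push_cast; ring
  rw [← this, Ne, ZMod.natCast_eq_zero_iff]
  intro h
  exact hp2 ((Nat.prime_dvd_prime_iff_eq Fact.out Nat.prime_two).mp h)

end CayP


/-- For `G ≅ Z_p³` (`p` an odd prime) there is a proper Cayley digraph on `G`
with Cayley index exactly `p` whose automorphism group contains a nonabelian
regular subgroup. -/
theorem stmt_10 {G : Type*} [CommGroup G] [Fintype G] (p : ℕ) (hp : p.Prime)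
    (hodd : Odd p) (hcard : Nat.card G = p ^ 3) (hexp : ∀ g : G, g ^ p = 1) :
    ∃ S : Set G, (1 : G) ∉ S ∧
      (∃ u v : G, cayAdj G S u v ∧ ¬ cayAdj G S v u) ∧
      (cayleyRR G S).index = p ∧
      ∃ H : Subgroup (Equiv.Perm G), H ≤ dAut (cayAdj G S) ∧ IsRegularSub H ∧
        ¬ ∀ a ∈ H, ∀ b ∈ H, a * b = b * a := by
  haveI hfact : Fact p.Prime := ⟨hp⟩
  haveI : NeZero p := ⟨hp.ne_zero⟩
  have hp2 : p ≠ 2 := by rintro rfl; norm_num [Nat.odd_iff] at hodd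
  have htwo : (2 : ZMod p) ≠ 0 := CayP.two_ne_zero' hp2
  have h1 : (2 : ZMod p) * CayP.half p = 1 := mul_inv_cancel₀ htwo
  have hsmul : ∀ x : Additive G, p • x = 0 := by
    intro x
    have hx := hexp (Additive.toMul x)
    have := congrArg Additive.ofMul hx
    rw [ofMul_pow] at this
    simpa using this
  letI instMod : Module (ZMod p) (Additive G) := AddCommGroup.zmodModule hsmul
  haveI : Finite (Additive G) := inferInstanceAs (Finite G)
  haveI : Module.Finite (ZMod p) (Additive G) := Module.Finite.of_finite (R := ZMod p) (M := Additive G)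
  haveI : Module.Free (ZMod p) (Additive G) := Module.Free.of_divisionRing _ _
  have hfr : Module.finrank (ZMod p) (Additive G) = 3 := by
    have hc := Module.card_eq_pow_finrank (K := ZMod p) (V := Additive G)
    rw [ZMod.card] at hc
    have hcardA : Fintype.card (Additive G) = p ^ 3 := by
      rw [← Nat.card_eq_fintype_card]
      have : Nat.card (Additive G) = Nat.card G := Nat.card_congr Additive.toMul
      rw [this, hcard]
    rw [hcardA] at hc
    exact (Nat.pow_right_injective hp.two_le hc.symm)
  let B := @Module.finBasisOfFinrankEq (ZMod p) (Additive G) _ _ instMod ‹Module.Free _ _› _ ‹Module.Finite _ _› 3 hfr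
  let E : G ≃ CayP.V p :=
    (Additive.ofMul).trans (B.equivFun.toEquiv.trans (CayP.tripleEquiv p))
  have hE : ∀ u v : G, E (u * v) = E u + E v := by
    intro u v
    show CayP.tripleEquiv p (B.equivFun.toEquiv (Additive.ofMul (u * v))) = _
    rw [LinearEquiv.coe_toEquiv, ofMul_mul, B.equivFun.map_add, CayP.tripleEquiv_add]
    rfl
  refine ⟨CayP.SG E, CayP.one_not_mem E hE h1, CayP.proper_arc E hE h1,
    CayP.index_val E hE h1 hp.pos hcard,
    CayP.HG E h1, CayP.HG_le_dAut E hE h1, CayP.HG_regular E h1,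
    CayP.HG_nonabelian E h1⟩
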